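/- For every n ∈ ℕ ∪ {0} and β ∈ [0, 1/3), the set of t ∈ T_β such that 2^k · t ∈ T_β for all k ∈ {0, 1, …, n} equals T_{β/2^n}, where T_β = {t ∈ 𝕋 : θ(t) ≤ β} and 2^k · t denotes t^{2^k}. -/
import Mathlib

noncomputable section

/-- The circle group `𝕋 = ℝ/ℤ`. -/
abbrev 𝕋 := AddCircle (1 : ℝ)

instance : Fact ((0 : ℝ) < 1) := ⟨one_pos⟩

/-- `⟨t⟩`: the unique representative of `t` in the interval `(-1/2, 1/2]`. -/
def torusArg (t : 𝕋) : ℝ := (AddCircle.equivIoc 1 (-(1/2)) t : ℝ)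

/-- `θ(t) = |⟨t⟩|`, the norm of `t ∈ 𝕋`. -/
def torusNorm (t : 𝕋) : ℝ := |torusArg t|

/-- `T_β = {t ∈ 𝕋 : θ(t) ≤ β}`. -/
def Tset (β : ℝ) : Set 𝕋 := {t | torusNorm t ≤ β}

lemma torusArg_mem (t : 𝕋) : torusArg t ∈ Set.Ioc (-(1/2) : ℝ) (1/2) := by
  have h := (AddCircle.equivIoc 1 (-(1/2)) t).2
  simp only [torusArg]
  constructor
  · simpa using h.1
  · have := h.2; norm_num at this ⊢; linarith

lemma torusArg_coe (t : 𝕋) : ((torusArg t : ℝ) : 𝕋) = t := by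
  exact (AddCircle.equivIoc 1 (-(1/2))).symm_apply_apply t

lemma norm_coe_of_abs_le {x : ℝ} (hx : |x| ≤ 1/2) : ‖((x : ℝ) : 𝕋)‖ = |x| := by
  rcases eq_or_lt_of_le hx with h | h
  · rw [AddCircle.norm_eq]
    simp only [inv_one, one_mul, mul_one]
    rcases (abs_eq (by norm_num : (0:ℝ) ≤ 1/2)).mp h with rfl | rfl
    · norm_num [round_eq]
    · norm_num [round_eq]
  · rw [AddCircle.norm_eq]
    simp only [inv_one, one_mul, mul_one]
    have : round x = 0 := by
      rw [round_eq_zero_iff]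
      exact ⟨by linarith [neg_abs_le x], by linarith [le_abs_self x]⟩
    simp [this]

lemma norm_coe_of_half_lt {x : ℝ} (h1 : 1/2 < x) (h2 : x < 1) : ‖((x : ℝ) : 𝕋)‖ = 1 - x := by
  rw [AddCircle.norm_eq]
  simp only [inv_one, one_mul, mul_one]
  have hr : round x = 1 := by
    rw [round_eq]
    have : (⌊x + 1/2⌋ : ℤ) = 1 := by
      rw [Int.floor_eq_iff]
      constructor <;> push_cast <;> linarith
    simpa using this
  rw [hr]
  rw [abs_of_nonpos (by push_cast; linarith)]
  push_cast; ring

lemma torusNorm_eq_norm (t : 𝕋) : torusNorm t = ‖t‖ := by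
  conv_rhs => rw [← torusArg_coe t]
  rw [norm_coe_of_abs_le]
  · rfl
  · have h := torusArg_mem t
    rw [abs_le]; exact ⟨h.1.le, h.2⟩

lemma key_step {β γ : ℝ} (hβ0 : 0 ≤ β) (hβ : β < 1/3) (hγβ : γ ≤ β) (t : 𝕋) :
    (‖t‖ ≤ β ∧ ‖(2 : ℕ) • t‖ ≤ γ) ↔ ‖t‖ ≤ γ / 2 := by
  set x := torusArg t with hx
  have hxm := torusArg_mem t
  have hct : ((x : ℝ) : 𝕋) = t := torusArg_coe t
  have hnorm : ‖t‖ = |x| := by rw [← torusNorm_eq_norm]; rfl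
  have h2t : (2:ℕ) • t = (((2*x : ℝ)) : 𝕋) := by
    rw [two_nsmul, ← hct, ← AddCircle.coe_add]; ring_nf
  constructor
  · rintro ⟨h1, h2'⟩
    rw [hnorm] at h1 ⊢
    by_cases hq : |x| ≤ 1/4
    · have : ‖(2:ℕ) • t‖ = 2 * |x| := by
        rw [h2t, norm_coe_of_abs_le (by rw [abs_mul]; rw [abs_two]; linarith)]
        rw [abs_mul, abs_two]
      linarith [this ▸ h2']
    · exfalso
      push_neg at hq
      have habs : |2*x| = 2 * |x| := by rw [abs_mul, abs_two]
      have hgt : 1/2 < |2*x| := by rw [habs]; linarith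
      have hlt : |2*x| < 1 := by rw [habs]; linarith
      have : ‖(2:ℕ) • t‖ = 1 - |2*x| := by
        rw [h2t]
        rcases le_or_gt 0 (2*x) with hpos | hneg
        · rw [abs_of_nonneg hpos]
          exact norm_coe_of_half_lt (by rwa [abs_of_nonneg hpos] at hgt)
            (by rwa [abs_of_nonneg hpos] at hlt)
        · rw [abs_of_neg hneg]
          have hc : (((2*x : ℝ)) : 𝕋) = -(((-(2*x) : ℝ)) : 𝕋) := by
            rw [← AddCircle.coe_neg, neg_neg]
          rw [hc, norm_neg]
          exact norm_coe_of_half_lt (by rwa [abs_of_neg hneg] at hgt)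
            (by rwa [abs_of_neg hneg] at hlt)
      rw [this] at h2'
      have : 1 - |2*x| ≤ γ := h2'
      rw [habs] at this
      -- |x| ≤ β < 1/3 so 2|x| < 2/3, 1 - 2|x| > 1/3 > β ≥ γ
      linarith
  · intro h
    rw [hnorm] at h ⊢
    have hx4 : |x| ≤ 1/4 := by linarith
    have : ‖(2:ℕ) • t‖ = 2 * |x| := by
      rw [h2t, norm_coe_of_abs_le (by rw [abs_mul, abs_two]; linarith)]
      rw [abs_mul, abs_two]
    exact ⟨by linarith, by rw [this]; linarith⟩

theorem stmt7 (n : ℕ) (β : ℝ) (hβ : β ∈ Set.Ico (0 : ℝ) (1/3)) :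
    {t : 𝕋 | ∀ k ≤ n, (2 ^ k : ℕ) • t ∈ Tset β} = Tset (β / 2 ^ n) := by
  obtain ⟨hβ0, hβ1⟩ := hβ
  induction n with
  | zero =>
    ext t
    simp [Tset, Set.mem_setOf_eq, Nat.le_zero]
  | succ n ih =>
    ext t
    simp only [Set.mem_setOf_eq]
    have hsplit : (∀ k ≤ n + 1, (2 ^ k : ℕ) • t ∈ Tset β) ↔
        (t ∈ Tset β ∧ ∀ k ≤ n, (2 ^ k : ℕ) • ((2:ℕ) • t) ∈ Tset β) := by
      constructor
      · intro h
        refine ⟨by simpa using h 0 (by omega), fun k hk => ?_⟩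
        have := h (k+1) (by omega)
        rwa [pow_succ, mul_smul] at this
      · rintro ⟨h0, h⟩ k hk
        rcases Nat.eq_zero_or_pos k with rfl | hkpos
        · simpa using h0
        · obtain ⟨m, rfl⟩ := Nat.exists_eq_succ_of_ne_zero (Nat.pos_iff_ne_zero.mp hkpos)
          have := h m (by omega)
          rwa [pow_succ, mul_smul]
    rw [hsplit]
    have h2mem : (∀ k ≤ n, (2 ^ k : ℕ) • ((2:ℕ) • t) ∈ Tset β) ↔ (2:ℕ) • t ∈ Tset (β / 2 ^ n) := by
      constructor
      · intro h
        have : (2:ℕ) • t ∈ {s : 𝕋 | ∀ k ≤ n, (2 ^ k : ℕ) • s ∈ Tset β} := h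
        rwa [ih] at this
      · intro h
        have : (2:ℕ) • t ∈ {s : 𝕋 | ∀ k ≤ n, (2 ^ k : ℕ) • s ∈ Tset β} := by rw [ih]; exact h
        exact this
    rw [h2mem]
    have hγβ : β / 2 ^ n ≤ β := by
      apply div_le_self hβ0
      exact one_le_pow₀ (by norm_num)
    have hk := key_step hβ0 hβ1 hγβ t
    simp only [Tset, Set.mem_setOf_eq, torusNorm_eq_norm] at *
    rw [show β / 2 ^ (n+1) = (β / 2 ^ n) / 2 by rw [pow_succ]; ring]
    exact hk
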